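/- Let G be a simple connected graph and suppose κ_LLY(x,y) ≥ κ₀ > 0 for every edge xy of G. Then the diameter of G satisfies diam(G) ≤ 2/κ₀. -/

import Mathlib

open Filter Set

variable {V : Type*}

-- The `α`-lazy random walk distribution at vertex `x`.
open Classical in
noncomputable def lazyWalk (G : SimpleGraph V) [G.LocallyFinite] (α : ℝ) (x : V) : V → ℝ :=
  fun v => if v = x then α else if G.Adj x v then (1 - α) / (G.degree x : ℝ) else 0

/-- `A` is a coupling between the finitely supported distributions `m₁` and `m₂`. -/
def IsCoupling (m₁ m₂ : V → ℝ) (A : V → V → ℝ) : Prop :=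
  (Function.support fun p : V × V => A p.1 p.2).Finite ∧
  (∀ x y, 0 ≤ A x y ∧ A x y ≤ 1) ∧
  (∀ x, ∑ᶠ y, A x y = m₁ x) ∧
  (∀ y, ∑ᶠ x, A x y = m₂ y)

/-- The transportation (Wasserstein) distance between two distributions on `V`,
with respect to the graph distance of `G`. -/
noncomputable def transportDist (G : SimpleGraph V) (m₁ m₂ : V → ℝ) : ℝ :=
  sInf {w : ℝ | ∃ A : V → V → ℝ, IsCoupling m₁ m₂ A ∧
    w = ∑ᶠ p : V × V, A p.1 p.2 * (G.dist p.1 p.2 : ℝ)}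

/-- The `α`-Ricci curvature `κ_α(x,y)`. -/
noncomputable def alphaRicci (G : SimpleGraph V) [G.LocallyFinite] (α : ℝ) (x y : V) : ℝ :=
  1 - transportDist G (lazyWalk G α x) (lazyWalk G α y) / (G.dist x y : ℝ)

/-- `κ` is the Lin–Lu–Yau Ricci curvature of the pair `(x,y)`:
the limit of `κ_α(x,y)/(1-α)` as `α → 1⁻`. -/
def HasLLYCurv (G : SimpleGraph V) [G.LocallyFinite] (x y : V) (κ : ℝ) : Prop :=
  Tendsto (fun α : ℝ => alphaRicci G α x y / (1 - α)) (nhdsWithin 1 (Set.Iio 1)) (nhds κ)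

/-- `G` is positively curved: every edge has positive Lin–Lu–Yau Ricci curvature. -/
def PositivelyCurved (G : SimpleGraph V) [G.LocallyFinite] : Prop :=
  ∀ ⦃x y : V⦄, G.Adj x y → ∃ κ : ℝ, 0 < κ ∧ HasLLYCurv G x y κ

/-- `G` is planar: it admits a topological embedding in the plane, i.e. an injective
placement of the vertices together with arcs for the edges, where arcs are injective
continuous curves joining the endpoints, not passing through any other vertex, and
two arcs of distinct edges meet only in common endpoints. -/
def IsPlanar (G : SimpleGraph V) : Prop :=
  ∃ (f : V → ℝ × ℝ) (e : ∀ u v : V, G.Adj u v → Set.Icc (0:ℝ) 1 → ℝ × ℝ),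
    Function.Injective f ∧
    (∀ u v (h : G.Adj u v), Continuous (e u v h)) ∧
    (∀ u v (h : G.Adj u v), Function.Injective (e u v h)) ∧
    (∀ u v (h : G.Adj u v),
      e u v h ⟨0, Set.left_mem_Icc.mpr zero_le_one⟩ = f u ∧
      e u v h ⟨1, Set.right_mem_Icc.mpr zero_le_one⟩ = f v) ∧
    (∀ u v (h : G.Adj u v) (w : V), w ≠ u → w ≠ v → f w ∉ Set.range (e u v h)) ∧
    (∀ u v (h : G.Adj u v) (u' v' : V) (h' : G.Adj u' v'), ({u, v} : Set V) ≠ {u', v'} →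
      Set.range (e u v h) ∩ Set.range (e u' v' h') ⊆ (f '' {u, v}) ∩ (f '' {u', v'}))

----------------------------------------------------------------
-- Auxiliary development
----------------------------------------------------------------

section Aux

open Function

/-- The set of coupling costs. -/
def cSet (G : SimpleGraph V) (m₁ m₂ : V → ℝ) : Set ℝ :=
  {w : ℝ | ∃ A : V → V → ℝ, IsCoupling m₁ m₂ A ∧
    w = ∑ᶠ p : V × V, A p.1 p.2 * (G.dist p.1 p.2 : ℝ)}

lemma transportDist_eq (G : SimpleGraph V) (m₁ m₂ : V → ℝ) :
    transportDist G m₁ m₂ = sInf (cSet G m₁ m₂) := rfl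

lemma cSet_nonneg {G : SimpleGraph V} {m₁ m₂ : V → ℝ} : ∀ c ∈ cSet G m₁ m₂, (0:ℝ) ≤ c := by
  rintro c ⟨A, hA, rfl⟩
  exact finsum_nonneg fun p => mul_nonneg (hA.2.1 _ _).1 (Nat.cast_nonneg _)

lemma cSet_bddBelow {G : SimpleGraph V} {m₁ m₂ : V → ℝ} : BddBelow (cSet G m₁ m₂) :=
  ⟨0, fun c hc => cSet_nonneg c hc⟩

namespace IsCoupling

variable {m₁ m₂ : V → ℝ} {A : V → V → ℝ}

lemma nn (h : IsCoupling m₁ m₂ A) (u v : V) : 0 ≤ A u v := (h.2.1 u v).1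

lemma row_finite (h : IsCoupling m₁ m₂ A) (u : V) : (support (A u)).Finite :=
  (h.1.image Prod.snd).subset fun v hv => ⟨(u, v), hv, rfl⟩

lemma col_finite (h : IsCoupling m₁ m₂ A) (v : V) : (support fun u => A u v).Finite :=
  (h.1.image Prod.fst).subset fun u hu => ⟨(u, v), hu, rfl⟩

lemma le_m₁ (h : IsCoupling m₁ m₂ A) (u v : V) : A u v ≤ m₁ u := by
  rw [← h.2.2.1 u]
  exact single_le_finsum v (h.row_finite u) fun v' => h.nn u v'

lemma le_m₂ (h : IsCoupling m₁ m₂ A) (u v : V) : A u v ≤ m₂ v := by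
  rw [← h.2.2.2 v]
  exact single_le_finsum u (h.col_finite v) fun u' => h.nn u' v

lemma m₂_nonneg (h : IsCoupling m₁ m₂ A) (v : V) : 0 ≤ m₂ v := by
  rw [← h.2.2.2 v]; exact finsum_nonneg fun u => h.nn u v

lemma rowsum (h : IsCoupling m₁ m₂ A) {P : Finset V}
    (hP : ∀ u v, A u v ≠ 0 → v ∈ P) (u : V) : ∑ v ∈ P, A u v = m₁ u := by
  rw [← h.2.2.1 u]
  exact (finsum_eq_sum_of_support_subset _ fun v hv => Finset.mem_coe.mpr (hP u v hv)).symm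

lemma colsum (h : IsCoupling m₁ m₂ A) {P : Finset V}
    (hP : ∀ u v, A u v ≠ 0 → u ∈ P) (v : V) : ∑ u ∈ P, A u v = m₂ v := by
  rw [← h.2.2.2 v]
  exact (finsum_eq_sum_of_support_subset _ fun u hu => Finset.mem_coe.mpr (hP u v hu)).symm

end IsCoupling

lemma finsum_pair_eq {A : V → V → ℝ} {P Q : Finset V}
    (hPQ : ∀ u v, A u v ≠ 0 → u ∈ P ∧ v ∈ Q) (f : V → V → ℝ) :
    ∑ᶠ p : V × V, A p.1 p.2 * f p.1 p.2 = ∑ u ∈ P, ∑ v ∈ Q, A u v * f u v := by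
  have hsub : (Function.support fun p : V × V => A p.1 p.2 * f p.1 p.2) ⊆ ↑(P ×ˢ Q) := by
    intro p hp
    have hA : A p.1 p.2 ≠ 0 := by
      intro h0
      exact hp (by simp [h0])
    exact Finset.mem_coe.mpr (Finset.mem_product.mpr (hPQ _ _ hA))
  rw [finsum_eq_sum_of_support_subset _ hsub]
  exact Finset.sum_product _ _ _

end Aux
section LazyWalk

open Function

variable [DecidableEq V] {G : SimpleGraph V} [G.LocallyFinite] {α : ℝ}

lemma lazyWalk_nonneg (hα0 : 0 ≤ α) (hα1 : α ≤ 1) (x v : V) : 0 ≤ lazyWalk G α x v := by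
  unfold lazyWalk
  split_ifs with h1 h2
  · exact hα0
  · exact div_nonneg (by linarith) (Nat.cast_nonneg _)
  · exact le_refl 0

lemma lazyWalk_le_one (hα0 : 0 ≤ α) (hα1 : α ≤ 1) (x v : V) : lazyWalk G α x v ≤ 1 := by
  unfold lazyWalk
  split_ifs with h1 h2
  · exact hα1
  · rcases Nat.eq_zero_or_pos (G.degree x) with h | h
    · simp [h]
    · rw [div_le_one (by exact_mod_cast h)]
      have : (1:ℝ) ≤ (G.degree x : ℝ) := by exact_mod_cast h
      linarith
  · exact zero_le_one

lemma lazyWalk_support (G : SimpleGraph V) [G.LocallyFinite] (α : ℝ) (x : V) :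
    support (lazyWalk G α x) ⊆ ↑(insert x (G.neighborFinset x)) := by
  intro v hv
  by_cases hvx : v = x
  · subst hvx; simp
  · by_cases hadj : G.Adj x v
    · simp [hadj]
    · exfalso; apply hv; simp [lazyWalk, hvx, hadj]

lemma lazyWalk_finite (G : SimpleGraph V) [G.LocallyFinite] (α : ℝ) (x : V) :
    (support (lazyWalk G α x)).Finite :=
  Set.Finite.subset (Finset.finite_toSet _) (lazyWalk_support G α x)

lemma lazyWalk_sum_mul (G : SimpleGraph V) [G.LocallyFinite] (α : ℝ) (x : V) (f : V → ℝ) :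
    ∑ᶠ v, lazyWalk G α x v * f v
      = α * f x + ∑ v ∈ G.neighborFinset x, (1 - α) / (G.degree x : ℝ) * f v := by
  classical
  have hsub : (support fun v => lazyWalk G α x v * f v) ⊆ ↑(insert x (G.neighborFinset x)) := by
    intro v hv
    exact lazyWalk_support G α x (left_ne_zero_of_mul hv)
  rw [finsum_eq_sum_of_support_subset _ hsub, Finset.sum_insert (by simp)]
  congr 1
  · simp [lazyWalk]
  · refine Finset.sum_congr rfl fun v hv => ?_
    rw [SimpleGraph.mem_neighborFinset] at hv
    have hvx : v ≠ x := fun h => G.irrefl (h ▸ hv)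
    simp [lazyWalk, hvx, hv]

lemma lazyWalk_total (G : SimpleGraph V) [G.LocallyFinite] (α : ℝ) {x : V}
    (hd : 0 < G.degree x) : ∑ᶠ v, lazyWalk G α x v = 1 := by
  have h := lazyWalk_sum_mul G α x (fun _ => 1)
  simp only [mul_one] at h
  rw [h, Finset.sum_const, SimpleGraph.card_neighborFinset_eq_degree, nsmul_eq_mul]
  have hd' : (G.degree x : ℝ) ≠ 0 := by exact_mod_cast hd.ne'
  have : (G.degree x : ℝ) * ((1 - α) / (G.degree x : ℝ)) = 1 - α := by field_simp
  rw [this]; ring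

lemma lazyWalk_prod_coupling (G : SimpleGraph V) [G.LocallyFinite]
    (hα0 : 0 ≤ α) (hα1 : α ≤ 1) {x y : V}
    (hdx : 0 < G.degree x) (hdy : 0 < G.degree y) :
    IsCoupling (lazyWalk G α x) (lazyWalk G α y)
      (fun u v => lazyWalk G α x u * lazyWalk G α y v) := by
  refine ⟨?_, ?_, ?_, ?_⟩
  · apply Set.Finite.subset ((lazyWalk_finite G α x).prod (lazyWalk_finite G α y))
    intro p hp
    have hp' : lazyWalk G α x p.1 * lazyWalk G α y p.2 ≠ 0 := hp
    exact ⟨left_ne_zero_of_mul hp', right_ne_zero_of_mul hp'⟩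
  · intro u v
    exact ⟨mul_nonneg (lazyWalk_nonneg hα0 hα1 x u) (lazyWalk_nonneg hα0 hα1 y v),
      mul_le_one₀ (lazyWalk_le_one hα0 hα1 x u) (lazyWalk_nonneg hα0 hα1 y v)
        (lazyWalk_le_one hα0 hα1 y v)⟩
  · intro u
    rw [← mul_finsum' _ _ (lazyWalk_finite G α y), lazyWalk_total G α hdy, mul_one]
  · intro v
    rw [← finsum_mul' _ _ (lazyWalk_finite G α x), lazyWalk_total G α hdx, one_mul]

lemma cSet_nonempty (G : SimpleGraph V) [G.LocallyFinite]
    (hα0 : 0 ≤ α) (hα1 : α ≤ 1) {x y : V}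
    (hdx : 0 < G.degree x) (hdy : 0 < G.degree y) :
    (cSet G (lazyWalk G α x) (lazyWalk G α y)).Nonempty :=
  ⟨_, ⟨_, lazyWalk_prod_coupling G hα0 hα1 hdx hdy, rfl⟩⟩

lemma transport_self_nonpos (G : SimpleGraph V) [G.LocallyFinite]
    (hα0 : 0 ≤ α) (hα1 : α ≤ 1) (x : V) :
    transportDist G (lazyWalk G α x) (lazyWalk G α x) ≤ 0 := by
  classical
  set m := lazyWalk G α x with hm
  have hA : IsCoupling m m (fun u v => if v = u then m u else 0) := by
    refine ⟨?_, ?_, ?_, ?_⟩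
    · apply Set.Finite.subset ((lazyWalk_finite G α x).image (fun v => (v, v)))
      rintro ⟨u, v⟩ hp
      have hp' : (if v = u then m u else 0) ≠ 0 := hp
      by_cases hvu : v = u
      · subst hvu
        rw [if_pos rfl] at hp'
        exact ⟨v, hp', rfl⟩
      · rw [if_neg hvu] at hp'; exact absurd rfl hp'
    · intro u v
      by_cases hvu : v = u
      · simp only [hvu, if_pos rfl]
        exact ⟨lazyWalk_nonneg hα0 hα1 x u, lazyWalk_le_one hα0 hα1 x u⟩
      · simp [hvu]
    · intro u
      rw [finsum_eq_single _ u fun v hv => if_neg hv, if_pos rfl]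
    · intro v
      rw [finsum_eq_single _ v fun u hu => if_neg (fun h => hu h.symm), if_pos rfl]
  have h0 : (0:ℝ) ∈ cSet G m m := by
    refine ⟨_, hA, ?_⟩
    refine (finsum_eq_zero_of_forall_eq_zero ?_).symm
    rintro ⟨u, v⟩
    by_cases hvu : v = u
    · subst hvu; simp [SimpleGraph.dist_self]
    · simp [hvu]
  exact csInf_le cSet_bddBelow h0

end LazyWalk
section Comp

open Function

lemma coupling_comp {m1 m2 m3 : V → ℝ} {A1 A2 : V → V → ℝ}
    (h1 : IsCoupling m1 m2 A1) (h2 : IsCoupling m2 m3 A2)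
    (hm1 : ∀ u, m1 u ≤ 1) (G : SimpleGraph V) (hc : G.Connected) :
    ∃ c ∈ cSet G m1 m3,
      c ≤ (∑ᶠ p : V × V, A1 p.1 p.2 * (G.dist p.1 p.2 : ℝ))
        + ∑ᶠ p : V × V, A2 p.1 p.2 * (G.dist p.1 p.2 : ℝ) := by
  classical
  set T1 := h1.1.toFinset with hT1
  set T2 := h2.1.toFinset with hT2
  set P1 := T1.image Prod.fst with hP1def
  set S := T1.image Prod.snd ∪ T2.image Prod.fst with hSdef
  set P3 := T2.image Prod.snd with hP3def
  have hmem1 : ∀ u v, A1 u v ≠ 0 → u ∈ P1 ∧ v ∈ S := by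
    intro u v hA
    have hmem : (u, v) ∈ T1 := h1.1.mem_toFinset.mpr hA
    exact ⟨Finset.mem_image.mpr ⟨(u, v), hmem, rfl⟩,
      Finset.mem_union_left _ (Finset.mem_image.mpr ⟨(u, v), hmem, rfl⟩)⟩
  have hmem2 : ∀ v w, A2 v w ≠ 0 → v ∈ S ∧ w ∈ P3 := by
    intro v w hA
    have hmem : (v, w) ∈ T2 := h2.1.mem_toFinset.mpr hA
    exact ⟨Finset.mem_union_right _ (Finset.mem_image.mpr ⟨(v, w), hmem, rfl⟩),
      Finset.mem_image.mpr ⟨(v, w), hmem, rfl⟩⟩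
  have rowA1 : ∀ u, ∑ v ∈ S, A1 u v = m1 u :=
    fun u => h1.rowsum (fun u v hA => (hmem1 u v hA).2) u
  have colA1 : ∀ v, ∑ u ∈ P1, A1 u v = m2 v :=
    fun v => h1.colsum (fun u v hA => (hmem1 u v hA).1) v
  have rowA2 : ∀ v, ∑ w ∈ P3, A2 v w = m2 v :=
    fun v => h2.rowsum (fun v w hA => (hmem2 v w hA).2) v
  have colA2 : ∀ w, ∑ v ∈ S, A2 v w = m3 w :=
    fun w => h2.colsum (fun v w hA => (hmem2 v w hA).1) w
  have hm2nn : ∀ v, 0 ≤ m2 v := h1.m₂_nonneg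
  have hvan1 : ∀ v, m2 v = 0 → ∀ u, A1 u v = 0 :=
    fun v hv u => le_antisymm (hv ▸ h1.le_m₂ u v) (h1.nn u v)
  have hvan2 : ∀ v, m2 v = 0 → ∀ w, A2 v w = 0 :=
    fun v hv w => le_antisymm (hv ▸ h2.le_m₁ v w) (h2.nn v w)
  set B : V → V → ℝ :=
    fun u w => ∑ v ∈ S, if m2 v = 0 then 0 else A1 u v * A2 v w / m2 v with hB
  have tnn : ∀ u v w, 0 ≤ (if m2 v = 0 then 0 else A1 u v * A2 v w / m2 v) := by
    intro u v w
    split_ifs with hv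
    · exact le_refl 0
    · exact div_nonneg (mul_nonneg (h1.nn u v) (h2.nn v w)) (hm2nn v)
  have Bnn : ∀ u w, 0 ≤ B u w := fun u w => Finset.sum_nonneg fun v _ => tnn u v w
  have Ble : ∀ u w, B u w ≤ m1 u := by
    intro u w
    rw [← rowA1 u]
    apply Finset.sum_le_sum
    intro v _
    split_ifs with hv
    · exact h1.nn u v
    · have hv' : 0 < m2 v := (hm2nn v).lt_of_ne (Ne.symm hv)
      rw [mul_div_assoc]
      exact mul_le_of_le_one_right (h1.nn u v) ((div_le_one hv').mpr (h2.le_m₁ v w))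
  have Bmem : ∀ u w, B u w ≠ 0 → u ∈ P1 ∧ w ∈ P3 := by
    intro u w hB0
    obtain ⟨v, -, hv⟩ := Finset.exists_ne_zero_of_sum_ne_zero hB0
    by_cases hm : m2 v = 0
    · rw [if_pos hm] at hv; exact absurd rfl hv
    · rw [if_neg hm] at hv
      have h1' : A1 u v ≠ 0 := fun h0 => hv (by simp [h0])
      have h2' : A2 v w ≠ 0 := fun h0 => hv (by simp [h0])
      exact ⟨(hmem1 u v h1').1, (hmem2 v w h2').2⟩
  have inner1 : ∀ u v, ∑ w ∈ P3, (if m2 v = 0 then 0 else A1 u v * A2 v w / m2 v) = A1 u v := by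
    intro u v
    by_cases hm : m2 v = 0
    · simp [hm, hvan1 v hm u]
    · simp only [if_neg hm]
      rw [← Finset.sum_div, ← Finset.mul_sum, rowA2 v, mul_div_assoc, div_self hm, mul_one]
  have inner2 : ∀ v w, ∑ u ∈ P1, (if m2 v = 0 then 0 else A1 u v * A2 v w / m2 v) = A2 v w := by
    intro v w
    by_cases hm : m2 v = 0
    · simp [hm, hvan2 v hm w]
    · simp only [if_neg hm]
      rw [← Finset.sum_div, ← Finset.sum_mul, colA1 v, mul_comm, mul_div_assoc, div_self hm,
        mul_one]
  have hBcoup : IsCoupling m1 m3 B := by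
    refine ⟨?_, ?_, ?_, ?_⟩
    · apply Set.Finite.subset (P1 ×ˢ P3).finite_toSet
      intro p hp
      exact Finset.mem_coe.mpr (Finset.mem_product.mpr (Bmem p.1 p.2 hp))
    · intro u w
      exact ⟨Bnn u w, le_trans (Ble u w) (hm1 u)⟩
    · intro u
      rw [finsum_eq_sum_of_support_subset _
        (fun w hw => Finset.mem_coe.mpr (Bmem u w hw).2 : support (B u) ⊆ ↑P3)]
      calc ∑ w ∈ P3, B u w
          = ∑ v ∈ S, ∑ w ∈ P3, (if m2 v = 0 then 0 else A1 u v * A2 v w / m2 v) := by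
            simp only [hB]; exact Finset.sum_comm
        _ = ∑ v ∈ S, A1 u v := Finset.sum_congr rfl fun v _ => inner1 u v
        _ = m1 u := rowA1 u
    · intro w
      rw [finsum_eq_sum_of_support_subset _
        (fun u hu => Finset.mem_coe.mpr (Bmem u w hu).1 : (support fun u => B u w) ⊆ ↑P1)]
      calc ∑ u ∈ P1, B u w
          = ∑ v ∈ S, ∑ u ∈ P1, (if m2 v = 0 then 0 else A1 u v * A2 v w / m2 v) := by
            simp only [hB]; exact Finset.sum_comm
        _ = ∑ v ∈ S, A2 v w := Finset.sum_congr rfl fun v _ => inner2 v w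
        _ = m3 w := colA2 w
  refine ⟨_, ⟨B, hBcoup, rfl⟩, ?_⟩
  have ecB : ∑ᶠ p : V × V, B p.1 p.2 * (G.dist p.1 p.2 : ℝ)
      = ∑ u ∈ P1, ∑ w ∈ P3, B u w * (G.dist u w : ℝ) :=
    finsum_pair_eq (fun u w hB0 => Bmem u w hB0) fun u w => (G.dist u w : ℝ)
  have ec1 : ∑ᶠ p : V × V, A1 p.1 p.2 * (G.dist p.1 p.2 : ℝ)
      = ∑ u ∈ P1, ∑ v ∈ S, A1 u v * (G.dist u v : ℝ) :=
    finsum_pair_eq hmem1 fun u v => (G.dist u v : ℝ)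
  have ec2 : ∑ᶠ p : V × V, A2 p.1 p.2 * (G.dist p.1 p.2 : ℝ)
      = ∑ v ∈ S, ∑ w ∈ P3, A2 v w * (G.dist v w : ℝ) :=
    finsum_pair_eq hmem2 fun v w => (G.dist v w : ℝ)
  rw [ecB, ec1, ec2]
  have step1 : ∀ u w, B u w * (G.dist u w : ℝ)
      ≤ ∑ v ∈ S, (if m2 v = 0 then 0 else A1 u v * A2 v w / m2 v)
          * ((G.dist u v : ℝ) + (G.dist v w : ℝ)) := by
    intro u w
    simp only [hB]
    rw [Finset.sum_mul]
    apply Finset.sum_le_sum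
    intro v _
    apply mul_le_mul_of_nonneg_left ?_ (tnn u v w)
    have htri : G.dist u w ≤ G.dist u v + G.dist v w := hc.dist_triangle
    exact_mod_cast htri
  have part1 : ∑ u ∈ P1, ∑ w ∈ P3, ∑ v ∈ S,
        (if m2 v = 0 then 0 else A1 u v * A2 v w / m2 v) * (G.dist u v : ℝ)
      = ∑ u ∈ P1, ∑ v ∈ S, A1 u v * (G.dist u v : ℝ) := by
    refine Finset.sum_congr rfl fun u _ => ?_
    rw [Finset.sum_comm]
    refine Finset.sum_congr rfl fun v _ => ?_
    rw [← Finset.sum_mul, inner1 u v]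
  have part2 : ∑ u ∈ P1, ∑ w ∈ P3, ∑ v ∈ S,
        (if m2 v = 0 then 0 else A1 u v * A2 v w / m2 v) * (G.dist v w : ℝ)
      = ∑ v ∈ S, ∑ w ∈ P3, A2 v w * (G.dist v w : ℝ) := by
    calc ∑ u ∈ P1, ∑ w ∈ P3, ∑ v ∈ S,
          (if m2 v = 0 then 0 else A1 u v * A2 v w / m2 v) * (G.dist v w : ℝ)
        = ∑ w ∈ P3, ∑ u ∈ P1, ∑ v ∈ S,
          (if m2 v = 0 then 0 else A1 u v * A2 v w / m2 v) * (G.dist v w : ℝ) :=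
          Finset.sum_comm
      _ = ∑ w ∈ P3, ∑ v ∈ S, ∑ u ∈ P1,
          (if m2 v = 0 then 0 else A1 u v * A2 v w / m2 v) * (G.dist v w : ℝ) :=
          Finset.sum_congr rfl fun w _ => Finset.sum_comm
      _ = ∑ w ∈ P3, ∑ v ∈ S, A2 v w * (G.dist v w : ℝ) := by
          refine Finset.sum_congr rfl fun w _ => Finset.sum_congr rfl fun v _ => ?_
          rw [← Finset.sum_mul, inner2 v w]
      _ = ∑ v ∈ S, ∑ w ∈ P3, A2 v w * (G.dist v w : ℝ) := Finset.sum_comm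
  calc ∑ u ∈ P1, ∑ w ∈ P3, B u w * (G.dist u w : ℝ)
      ≤ ∑ u ∈ P1, ∑ w ∈ P3, ∑ v ∈ S,
          (if m2 v = 0 then 0 else A1 u v * A2 v w / m2 v)
            * ((G.dist u v : ℝ) + (G.dist v w : ℝ)) :=
        Finset.sum_le_sum fun u _ => Finset.sum_le_sum fun w _ => step1 u w
    _ = (∑ u ∈ P1, ∑ w ∈ P3, ∑ v ∈ S,
          (if m2 v = 0 then 0 else A1 u v * A2 v w / m2 v) * (G.dist u v : ℝ))
        + ∑ u ∈ P1, ∑ w ∈ P3, ∑ v ∈ S,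
          (if m2 v = 0 then 0 else A1 u v * A2 v w / m2 v) * (G.dist v w : ℝ) := by
        simp only [mul_add, Finset.sum_add_distrib]
    _ = (∑ u ∈ P1, ∑ v ∈ S, A1 u v * (G.dist u v : ℝ))
        + ∑ v ∈ S, ∑ w ∈ P3, A2 v w * (G.dist v w : ℝ) := by rw [part1, part2]

lemma transport_triangle (G : SimpleGraph V) (hc : G.Connected) {m1 m2 m3 : V → ℝ}
    (hm1 : ∀ u, m1 u ≤ 1)
    (hS1 : (cSet G m1 m2).Nonempty) (hS2 : (cSet G m2 m3).Nonempty) :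
    transportDist G m1 m3 ≤ transportDist G m1 m2 + transportDist G m2 m3 := by
  have key : ∀ c1 ∈ cSet G m1 m2, ∀ c2 ∈ cSet G m2 m3,
      transportDist G m1 m3 ≤ c1 + c2 := by
    rintro c1 ⟨A1, hA1, rfl⟩ c2 ⟨A2, hA2, rfl⟩
    obtain ⟨c, hcmem, hcle⟩ := coupling_comp hA1 hA2 hm1 G hc
    exact le_trans (csInf_le cSet_bddBelow hcmem) hcle
  rw [transportDist_eq G m1 m2, transportDist_eq G m2 m3]
  have h2 : ∀ c1 ∈ cSet G m1 m2, transportDist G m1 m3 - c1 ≤ sInf (cSet G m2 m3) :=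
    fun c1 hc1 => le_csInf hS2 fun c2 hc2 => by linarith [key c1 hc1 c2 hc2]
  have h3 : transportDist G m1 m3 - sInf (cSet G m2 m3) ≤ sInf (cSet G m1 m2) :=
    le_csInf hS1 fun c1 hc1 => by linarith [h2 c1 hc1]
  linarith

end Comp
section Walks

lemma walk_bound (G : SimpleGraph V) [G.LocallyFinite] (hc : G.Connected) {α : ℝ}
    (hα0 : 0 ≤ α) (hα1 : α ≤ 1) (hdeg : ∀ v, 0 < G.degree v)
    {a b : V} (p : G.Walk a b) :
    transportDist G (lazyWalk G α a) (lazyWalk G α b)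
      ≤ (p.darts.map fun d => 1 - alphaRicci G α d.toProd.1 d.toProd.2).sum := by
  classical
  induction p with
  | nil => simpa using transport_self_nonpos G hα0 hα1 _
  | @cons a b c hab p ih =>
    rw [SimpleGraph.Walk.darts_cons, List.map_cons, List.sum_cons]
    have htri := transport_triangle G hc (fun u => lazyWalk_le_one hα0 hα1 a u)
      (cSet_nonempty G hα0 hα1 (hdeg a) (hdeg b))
      (cSet_nonempty G hα0 hα1 (hdeg b) (hdeg c))
    have hedge : transportDist G (lazyWalk G α a) (lazyWalk G α b)
        = 1 - alphaRicci G α a b := by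
      have hd : G.dist a b = 1 := SimpleGraph.dist_eq_one_iff_adj.mpr hab
      simp [alphaRicci, hd]
    refine htri.trans ?_
    rw [hedge]
    linarith [ih]

lemma transport_lower (G : SimpleGraph V) [G.LocallyFinite] (hc : G.Connected) {α : ℝ}
    (hα0 : 0 ≤ α) (hα1 : α ≤ 1) {x y : V}
    (hdx : 0 < G.degree x) (hdy : 0 < G.degree y) :
    (G.dist x y : ℝ) - 2 * (1 - α)
      ≤ transportDist G (lazyWalk G α x) (lazyWalk G α y) := by
  classical
  apply le_csInf (cSet_nonempty G hα0 hα1 hdx hdy)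
  rintro c ⟨A, hA, rfl⟩
  set T := hA.1.toFinset with hT
  set P1 := T.image Prod.fst with hP1def
  set P2 := T.image Prod.snd with hP2def
  have hmem : ∀ u v, A u v ≠ 0 → u ∈ P1 ∧ v ∈ P2 := by
    intro u v h0
    have hmem : (u, v) ∈ T := hA.1.mem_toFinset.mpr h0
    exact ⟨Finset.mem_image.mpr ⟨(u, v), hmem, rfl⟩, Finset.mem_image.mpr ⟨(u, v), hmem, rfl⟩⟩
  have rowsum : ∀ u, ∑ v ∈ P2, A u v = lazyWalk G α x u :=
    fun u => hA.rowsum (fun u v h0 => (hmem u v h0).2) u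
  have colsum : ∀ v, ∑ u ∈ P1, A u v = lazyWalk G α y v :=
    fun v => hA.colsum (fun u v h0 => (hmem u v h0).1) v
  have hcost : ∑ᶠ p : V × V, A p.1 p.2 * (G.dist p.1 p.2 : ℝ)
      = ∑ u ∈ P1, ∑ v ∈ P2, A u v * (G.dist u v : ℝ) :=
    finsum_pair_eq hmem fun u v => (G.dist u v : ℝ)
  rw [hcost]
  have hge : ∑ u ∈ P1, ∑ v ∈ P2, A u v * ((G.dist u y : ℝ) - (G.dist v y : ℝ))
      ≤ ∑ u ∈ P1, ∑ v ∈ P2, A u v * (G.dist u v : ℝ) := by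
    refine Finset.sum_le_sum fun u _ => Finset.sum_le_sum fun v _ => ?_
    apply mul_le_mul_of_nonneg_left ?_ (hA.nn u v)
    have htri : G.dist u y ≤ G.dist u v + G.dist v y := hc.dist_triangle
    have htri' : (G.dist u y : ℝ) ≤ (G.dist u v : ℝ) + (G.dist v y : ℝ) := by exact_mod_cast htri
    linarith
  refine le_trans ?_ hge
  have expand : ∑ u ∈ P1, ∑ v ∈ P2, A u v * ((G.dist u y : ℝ) - (G.dist v y : ℝ))
      = (∑ u ∈ P1, lazyWalk G α x u * (G.dist u y : ℝ))
        - ∑ v ∈ P2, lazyWalk G α y v * (G.dist v y : ℝ) := by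
    simp only [mul_sub, Finset.sum_sub_distrib]
    congr 1
    · refine Finset.sum_congr rfl fun u _ => ?_
      rw [← Finset.sum_mul, rowsum u]
    · rw [Finset.sum_comm]
      refine Finset.sum_congr rfl fun v _ => ?_
      rw [← Finset.sum_mul, colsum v]
  rw [expand]
  have hsupp1 : ∀ u, lazyWalk G α x u ≠ 0 → u ∈ P1 := by
    intro u hu
    by_contra hun
    apply hu
    rw [← rowsum u]
    refine Finset.sum_eq_zero fun v _ => ?_
    by_contra hAv
    exact hun (hmem u v hAv).1
  have hsupp2 : ∀ v, lazyWalk G α y v ≠ 0 → v ∈ P2 := by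
    intro v hv
    by_contra hvn
    apply hv
    rw [← colsum v]
    refine Finset.sum_eq_zero fun u _ => ?_
    by_contra hAu
    exact hvn (hmem u v hAu).2
  have e1 : ∑ u ∈ P1, lazyWalk G α x u * (G.dist u y : ℝ)
      = ∑ᶠ u, lazyWalk G α x u * (G.dist u y : ℝ) :=
    (finsum_eq_sum_of_support_subset _
      fun u hu => Finset.mem_coe.mpr (hsupp1 u (left_ne_zero_of_mul hu))).symm
  have e2 : ∑ v ∈ P2, lazyWalk G α y v * (G.dist v y : ℝ)
      = ∑ᶠ v, lazyWalk G α y v * (G.dist v y : ℝ) :=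
    (finsum_eq_sum_of_support_subset _
      fun v hv => Finset.mem_coe.mpr (hsupp2 v (left_ne_zero_of_mul hv))).symm
  rw [e1, e2]
  have hdx' : (G.degree x : ℝ) ≠ 0 := by exact_mod_cast hdx.ne'
  have hdy' : (G.degree y : ℝ) ≠ 0 := by exact_mod_cast hdy.ne'
  have b1 : (G.dist x y : ℝ) - (1 - α) ≤ ∑ᶠ u, lazyWalk G α x u * (G.dist u y : ℝ) := by
    rw [lazyWalk_sum_mul]
    have hterm : ∀ v ∈ G.neighborFinset x,
        (1 - α) / (G.degree x : ℝ) * ((G.dist x y : ℝ) - 1)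
          ≤ (1 - α) / (G.degree x : ℝ) * (G.dist v y : ℝ) := by
      intro v hv
      rw [SimpleGraph.mem_neighborFinset] at hv
      apply mul_le_mul_of_nonneg_left ?_ (div_nonneg (by linarith) (Nat.cast_nonneg _))
      have h1 : G.dist x v = 1 := SimpleGraph.dist_eq_one_iff_adj.mpr hv
      have htri : G.dist x y ≤ G.dist x v + G.dist v y := hc.dist_triangle
      rw [h1] at htri
      have htri' : (G.dist x y : ℝ) ≤ 1 + (G.dist v y : ℝ) := by exact_mod_cast htri
      linarith
    have hsum := Finset.sum_le_sum hterm
    rw [Finset.sum_const, SimpleGraph.card_neighborFinset_eq_degree, nsmul_eq_mul] at hsum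
    have heval : (G.degree x : ℝ) * ((1 - α) / (G.degree x : ℝ) * ((G.dist x y : ℝ) - 1))
        = (1 - α) * ((G.dist x y : ℝ) - 1) := by
      field_simp
    rw [heval] at hsum
    have hid : α * (G.dist x y : ℝ) + (1 - α) * ((G.dist x y : ℝ) - 1)
        = (G.dist x y : ℝ) - (1 - α) := by ring
    linarith
  have b2 : ∑ᶠ v, lazyWalk G α y v * (G.dist v y : ℝ) = 1 - α := by
    rw [lazyWalk_sum_mul]
    simp only [SimpleGraph.dist_self, Nat.cast_zero, mul_zero, zero_add]
    have hterm : ∀ v ∈ G.neighborFinset y,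
        (1 - α) / (G.degree y : ℝ) * (G.dist v y : ℝ) = (1 - α) / (G.degree y : ℝ) := by
      intro v hv
      rw [SimpleGraph.mem_neighborFinset] at hv
      have h1 : G.dist v y = 1 := SimpleGraph.dist_eq_one_iff_adj.mpr hv.symm
      rw [h1, Nat.cast_one, mul_one]
    rw [Finset.sum_congr rfl hterm, Finset.sum_const,
      SimpleGraph.card_neighborFinset_eq_degree, nsmul_eq_mul]
    field_simp
  rw [b2]
  linarith

end Walks

section Lists

lemma list_sum_map_sub_one {ι : Type*} (l : List ι) (f : ι → ℝ) :
    (l.map fun i => 1 - f i).sum = l.length - (l.map f).sum := by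
  induction l with
  | nil => simp
  | cons a l ih =>
    simp only [List.map_cons, List.sum_cons, List.length_cons, ih, Nat.cast_succ]
    ring

lemma list_sum_map_div {ι : Type*} (l : List ι) (f : ι → ℝ) (c : ℝ) :
    (l.map fun i => f i / c).sum = (l.map f).sum / c := by
  induction l with
  | nil => simp
  | cons a l ih => simp [ih, add_div]

lemma list_card_mul_le_sum {ι : Type*} (l : List ι) (f : ι → ℝ) (c : ℝ)
    (h : ∀ i ∈ l, c ≤ f i) : (l.length : ℝ) * c ≤ (l.map f).sum := by
  induction l with
  | nil => simp
  | cons a l ih =>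
    simp only [List.map_cons, List.sum_cons, List.length_cons, Nat.cast_succ]
    have h1 := ih fun i hi => h i (List.mem_cons_of_mem a hi)
    have h2 := h a List.mem_cons_self
    have hid : ((l.length : ℝ) + 1) * c = (l.length : ℝ) * c + c := by ring
    linarith

lemma list_tendsto_sum {ι : Type*} (l : List ι) (F : ι → ℝ → ℝ) (g : ι → ℝ) {L : Filter ℝ}
    (h : ∀ i ∈ l, Tendsto (F i) L (nhds (g i))) :
    Tendsto (fun α => (l.map fun i => F i α).sum) L (nhds (l.map g).sum) := by
  induction l with
  | nil => simpa using tendsto_const_nhds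
  | cons a l ih =>
    simp only [List.map_cons, List.sum_cons]
    exact (h a List.mem_cons_self).add (ih fun i hi => h i (List.mem_cons_of_mem a hi))

end Lists

/-- Lemma 2 (diameter bound): if every edge of a simple connected graph has Lin–Lu–Yau
Ricci curvature at least `κ₀ > 0`, then the diameter of `G` is at most `2/κ₀`. -/
theorem diameter_bound (G : SimpleGraph V) [G.LocallyFinite] (hconn : G.Connected)
    (κ₀ : ℝ) (hκ₀ : 0 < κ₀)
    (h : ∀ x y : V, G.Adj x y → ∃ κ : ℝ, κ₀ ≤ κ ∧ HasLLYCurv G x y κ) :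
    ∀ x y : V, (G.dist x y : ℝ) ≤ 2 / κ₀ := by
  intro x y
  by_cases hxy : x = y
  · subst hxy
    simp only [SimpleGraph.dist_self, Nat.cast_zero]
    positivity
  have hdeg : ∀ v, 0 < G.degree v := by
    intro v
    rw [G.degree_pos_iff_exists_adj]
    rcases eq_or_ne v x with rfl | hvx
    · obtain ⟨p⟩ := hconn.preconnected v y
      cases p with
      | nil => exact absurd rfl hxy
      | cons hadj p => exact ⟨_, hadj⟩
    · obtain ⟨p⟩ := hconn.preconnected v x
      cases p with
      | nil => exact absurd rfl hvx
      | cons hadj p => exact ⟨_, hadj⟩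
  obtain ⟨p, hp⟩ := (hconn.preconnected x y).exists_walk_length_eq_dist
  have hchoice : ∀ d : G.Dart, ∃ κ : ℝ, κ₀ ≤ κ ∧ HasLLYCurv G d.toProd.1 d.toProd.2 κ :=
    fun d => h _ _ d.adj
  choose F hF1 hF2 using hchoice
  have hev : ∀ᶠ α in nhdsWithin (1:ℝ) (Set.Iio 1),
      (p.darts.map fun d => alphaRicci G α d.toProd.1 d.toProd.2 / (1 - α)).sum ≤ 2 := by
    filter_upwards [Ioo_mem_nhdsLT_of_mem
      (show (1:ℝ) ∈ Set.Ioc 0 1 from ⟨zero_lt_one, le_refl 1⟩)] with α hα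
    obtain ⟨hα0, hα1⟩ := hα
    have hα0' : (0:ℝ) ≤ α := hα0.le
    have hα1' : α ≤ 1 := hα1.le
    have hlow := transport_lower G hconn hα0' hα1' (hdeg x) (hdeg y)
    have hup := walk_bound G hconn hα0' hα1' hdeg p
    rw [list_sum_map_sub_one, SimpleGraph.Walk.length_darts, hp] at hup
    have hsum : (p.darts.map fun d => alphaRicci G α d.toProd.1 d.toProd.2).sum
        ≤ 2 * (1 - α) := by linarith
    calc (p.darts.map fun d => alphaRicci G α d.toProd.1 d.toProd.2 / (1 - α)).sum
        = (p.darts.map fun d => alphaRicci G α d.toProd.1 d.toProd.2).sum / (1 - α) :=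
          list_sum_map_div _ _ _
      _ ≤ 2 := by
          rw [div_le_iff₀ (by linarith : (0:ℝ) < 1 - α)]
          linarith
  have hlim : Tendsto
      (fun α : ℝ => (p.darts.map fun d => alphaRicci G α d.toProd.1 d.toProd.2 / (1 - α)).sum)
      (nhdsWithin 1 (Set.Iio 1)) (nhds ((p.darts.map F).sum)) :=
    list_tendsto_sum p.darts (fun d α => alphaRicci G α d.toProd.1 d.toProd.2 / (1 - α)) F
      fun d _ => hF2 d
  have hle2 : (p.darts.map F).sum ≤ 2 := le_of_tendsto hlim hev
  have hlb : ((p.darts.length : ℕ) : ℝ) * κ₀ ≤ (p.darts.map F).sum :=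
    list_card_mul_le_sum _ _ _ fun d _ => hF1 d
  rw [SimpleGraph.Walk.length_darts, hp] at hlb
  rw [le_div_iff₀ hκ₀]
  linarith
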